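/- For any m ≥ 1 and any m functions f₁,...,f_T with T = 2^{2m} labellings of a 2m-point set, there exists a labelling index j such that the average over all (2m)^m sequences S of length m from the support of D_j of the quantity (1/2m) Σ_{i=1}^{2m} 1[A(S)(x_i) ≠ y_i^{(j)}] is at least 1/8, for any fixed learner A mapping length-m sequences to functions on {x₁,...,x_{2m}}. -/

import Mathlib

open Finset

/-- If flipping coordinate `i` negates the predicate, the indicator sum is half. -/
lemma half_sum {n : ℕ} (p : (Fin n → Bool) → Prop) [DecidablePred p]
    (i : Fin n) (hflip : ∀ y, p (Function.update y i (!(y i))) ↔ ¬ p y) :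
    (2:ℝ) * ∑ y : Fin n → Bool, (if p y then (1:ℝ) else 0) = 2 ^ n := by
  have hg : Function.Involutive (fun y : Fin n → Bool => Function.update y i (!(y i))) := by
    intro y
    funext j
    by_cases hj : j = i
    · subst hj; simp
    · simp [Function.update_of_ne hj]
  have h1 : ∑ y : Fin n → Bool, (if p (Function.update y i (!(y i))) then (1:ℝ) else 0)
      = ∑ y : Fin n → Bool, (if p y then (1:ℝ) else 0) :=
    Fintype.sum_bijective _ hg.bijective _ _ (fun y => rfl)
  have h2 : ∑ y : Fin n → Bool, (if p (Function.update y i (!(y i))) then (1:ℝ) else 0)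
      = ∑ y : Fin n → Bool, (if ¬ p y then (1:ℝ) else 0) := by
    refine Finset.sum_congr rfl fun y _ => ?_
    simp [hflip y]
  have : (2:ℝ) * ∑ y : Fin n → Bool, (if p y then (1:ℝ) else 0)
      = ∑ y : Fin n → Bool, (1:ℝ) := by
    rw [two_mul]
    nth_rewrite 1 [← h1]
    rw [h2, ← Finset.sum_add_distrib]
    refine Finset.sum_congr rfl fun y _ => ?_
    by_cases h : p y <;> simp [h]
  rw [this]
  simp [Fintype.card_fun]

/-- Combinatorial core of the no-free-lunch theorem: given `2m` distinct points
`x i` and a learner `A` mapping length-`m` labelled sequences to predictors, there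
exists a labelling `y ∈ {0,1}^{2m}` (one of the `2^{2m}` labellings, i.e. one of the
distributions `D_j`) such that the average over all `(2m)^m` equally likely sample
sequences `S` of the error `(1/2m) Σ_i 1[A(S)(x i) ≠ y i]` is at least `1/8`. -/
theorem no_free_lunch_core {X : Type*} (m : ℕ) (hm : 1 ≤ m)
    (x : Fin (2 * m) → X) (hx : Function.Injective x)
    (A : (Fin m → X × Bool) → X → Bool) :
    ∃ y : Fin (2 * m) → Bool,
      (1 : ℝ) / 8 ≤
        (∑ S : Fin m → Fin (2 * m),
          (Nat.card {i : Fin (2 * m) //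
              A (fun k => (x (S k), y (S k))) (x i) ≠ y i} : ℝ) / (2 * m)) /
          ((2 * m) ^ m : ℕ) := by
  classical
  have hcard : ∀ (y : Fin (2 * m) → Bool) (S : Fin m → Fin (2 * m)),
      (Nat.card {i : Fin (2 * m) // A (fun k => (x (S k), y (S k))) (x i) ≠ y i} : ℝ)
        = ∑ i : Fin (2 * m),
            (if A (fun k => (x (S k), y (S k))) (x i) ≠ y i then (1:ℝ) else 0) := by
    intro y S
    rw [Nat.card_eq_fintype_card, Fintype.card_subtype, Finset.card_filter]
    push_cast
    exact Finset.sum_congr rfl fun i _ => by split <;> simp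
  have key : ∀ S : Fin m → Fin (2 * m),
      (m : ℝ) * 2 ^ (2 * m) / 2 ≤ ∑ y : Fin (2 * m) → Bool,
        (Nat.card {i : Fin (2 * m) // A (fun k => (x (S k), y (S k))) (x i) ≠ y i} : ℝ) := by
    intro S
    have hswap : ∑ y : Fin (2 * m) → Bool,
        (Nat.card {i : Fin (2 * m) // A (fun k => (x (S k), y (S k))) (x i) ≠ y i} : ℝ)
        = ∑ i : Fin (2 * m), ∑ y : Fin (2 * m) → Bool,
            (if A (fun k => (x (S k), y (S k))) (x i) ≠ y i then (1:ℝ) else 0) := by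
      rw [← Finset.sum_comm]
      exact Finset.sum_congr rfl fun y _ => hcard y S
    rw [hswap]
    set Out : Finset (Fin (2 * m)) := (Finset.univ.image S)ᶜ with hOut
    have hOutcard : (m : ℝ) ≤ Out.card := by
      have h1 : (Finset.univ.image S).card ≤ m := by
        calc (Finset.univ.image S).card ≤ (Finset.univ : Finset (Fin m)).card :=
              Finset.card_image_le
        _ = m := by simp
      have h2 : Out.card = 2 * m - (Finset.univ.image S).card := by
        rw [hOut, Finset.card_compl]; simp
      have : m ≤ Out.card := by omega
      exact_mod_cast this
    have hout : ∀ i ∈ Out, (2:ℝ) ^ (2 * m) / 2 = ∑ y : Fin (2 * m) → Bool,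
        (if A (fun k => (x (S k), y (S k))) (x i) ≠ y i then (1:ℝ) else 0) := by
      intro i hi
      have hne : ∀ k, S k ≠ i := by
        intro k hk
        rw [hOut] at hi
        simp only [Finset.mem_compl, Finset.mem_image] at hi
        exact hi ⟨k, Finset.mem_univ k, hk⟩
      have := half_sum (fun y => A (fun k => (x (S k), y (S k))) (x i) ≠ y i) i ?_
      · linarith
      · intro y
        show (A (fun k => (x (S k), Function.update y i (!(y i)) (S k))) (x i)
            ≠ Function.update y i (!(y i)) i)
          ↔ ¬ (A (fun k => (x (S k), y (S k))) (x i) ≠ y i)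
        have hs : (fun k => (x (S k), Function.update y i (!(y i)) (S k)))
            = fun k => (x (S k), y (S k)) := by
          funext k
          rw [Function.update_of_ne (hne k)]
        rw [hs, Function.update_self]
        cases A (fun k => (x (S k), y (S k))) (x i) <;> cases y i <;> simp
    calc (m : ℝ) * 2 ^ (2 * m) / 2 ≤ Out.card * (2 ^ (2 * m) / 2) := by
          have h2 : (0:ℝ) < 2 ^ (2 * m) / 2 := by positivity
          rw [mul_div_assoc]
          exact mul_le_mul_of_nonneg_right hOutcard (le_of_lt h2)
      _ = ∑ _i ∈ Out, ((2:ℝ) ^ (2 * m) / 2) := by rw [Finset.sum_const, nsmul_eq_mul]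
      _ = ∑ i ∈ Out, ∑ y : Fin (2 * m) → Bool,
            (if A (fun k => (x (S k), y (S k))) (x i) ≠ y i then (1:ℝ) else 0) :=
          Finset.sum_congr rfl hout
      _ ≤ ∑ i : Fin (2 * m), ∑ y : Fin (2 * m) → Bool,
            (if A (fun k => (x (S k), y (S k))) (x i) ≠ y i then (1:ℝ) else 0) := by
          refine Finset.sum_le_sum_of_subset_of_nonneg (Finset.subset_univ _) ?_
          intro i _ _
          exact Finset.sum_nonneg fun y _ => by positivity
  set E : (Fin (2 * m) → Bool) → ℝ := fun y =>
    (∑ S : Fin m → Fin (2 * m),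
      (Nat.card {i : Fin (2 * m) // A (fun k => (x (S k), y (S k))) (x i) ≠ y i} : ℝ)
        / (2 * m)) / ((2 * m) ^ m : ℕ) with hE
  have hMpos : (0:ℝ) < 2 * m := by positivity
  have hcpos : (0:ℝ) < ((2 * m) ^ m : ℕ) := by
    have : 0 < (2 * m) ^ m := Nat.pow_pos (by omega)
    exact_mod_cast this
  have hsumE : (2:ℝ) ^ (2 * m) / 4 ≤ ∑ y : Fin (2 * m) → Bool, E y := by
    have hre : ∑ y : Fin (2 * m) → Bool, E y
        = (∑ S : Fin m → Fin (2 * m), ∑ y : Fin (2 * m) → Bool,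
            (Nat.card {i : Fin (2 * m) //
              A (fun k => (x (S k), y (S k))) (x i) ≠ y i} : ℝ))
          / (2 * m) / ((2 * m) ^ m : ℕ) := by
      rw [hE]
      simp only [← Finset.sum_div]
      rw [Finset.sum_comm]
    rw [hre]
    have hb : ((2 * m) ^ m : ℕ) * ((m : ℝ) * 2 ^ (2 * m) / 2)
        ≤ ∑ S : Fin m → Fin (2 * m), ∑ y : Fin (2 * m) → Bool,
            (Nat.card {i : Fin (2 * m) //
              A (fun k => (x (S k), y (S k))) (x i) ≠ y i} : ℝ) := by
      have hc : (Fintype.card (Fin m → Fin (2 * m)) : ℝ) = ((2 * m) ^ m : ℕ) := by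
        simp [Fintype.card_fun]
      calc ((2 * m) ^ m : ℕ) * ((m : ℝ) * 2 ^ (2 * m) / 2)
          = ∑ _S : Fin m → Fin (2 * m), ((m : ℝ) * 2 ^ (2 * m) / 2) := by
            rw [Finset.sum_const, nsmul_eq_mul, Finset.card_univ, hc]
        _ ≤ _ := Finset.sum_le_sum fun S _ => key S
    rw [div_div, le_div_iff₀ (by positivity)]
    calc (2:ℝ) ^ (2 * m) / 4 * (2 * m * ((2 * m) ^ m : ℕ))
        = ((2 * m) ^ m : ℕ) * ((m : ℝ) * 2 ^ (2 * m) / 2) := by ring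
      _ ≤ _ := hb
  have hcardY : (Fintype.card (Fin (2 * m) → Bool) : ℝ) = 2 ^ (2 * m) := by
    simp [Fintype.card_fun]
  have hex : ∃ y : Fin (2 * m) → Bool, (1:ℝ)/4 ≤ E y := by
    by_contra h
    push_neg at h
    have hlt : ∑ y : Fin (2 * m) → Bool, E y < ∑ _y : Fin (2 * m) → Bool, (1:ℝ)/4 :=
      Finset.sum_lt_sum_of_nonempty ⟨fun _ => false, Finset.mem_univ _⟩ fun y _ => h y
    rw [Finset.sum_const, nsmul_eq_mul, Finset.card_univ, hcardY] at hlt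
    linarith
  obtain ⟨y, hy⟩ := hex
  exact ⟨y, le_trans (by norm_num) hy⟩
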